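/- arXiv:2211.16969 — 2 statements merged into one kernel-verified Lean document; each statement's English description precedes it below -/
import Mathlib

section
/- Let r = 1/√2 and θ ∈ ℝ. If a sequence (x_n) of reals satisfies x_{n+1} = cos(θ)·x_n² + sin(θ)·x_{n-1}² for all n ≥ 0, and |x_{-1}| ≤ r and |x_0| ≤ r, then |x_n| ≤ r for all n ≥ -1. -/
lemma key_step (θ a b : ℝ) (ha : |a| ≤ 1 / Real.sqrt 2) (hb : |b| ≤ 1 / Real.sqrt 2) :
    |Real.cos θ * a ^ 2 + Real.sin θ * b ^ 2| ≤ 1 / Real.sqrt 2 := by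
  have hr : (1 / Real.sqrt 2) ^ 2 = 1 / 2 := by
    rw [div_pow, one_pow, Real.sq_sqrt]; norm_num
  have hrpos : (0:ℝ) < 1 / Real.sqrt 2 := by positivity
  have ha2 : a ^ 2 ≤ 1 / 2 := by
    calc a ^ 2 = |a| ^ 2 := (sq_abs a).symm
    _ ≤ (1 / Real.sqrt 2) ^ 2 := by apply pow_le_pow_left₀ (abs_nonneg a) ha
    _ = 1 / 2 := hr
  have hb2 : b ^ 2 ≤ 1 / 2 := by
    calc b ^ 2 = |b| ^ 2 := (sq_abs b).symm
    _ ≤ (1 / Real.sqrt 2) ^ 2 := by apply pow_le_pow_left₀ (abs_nonneg b) hb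
    _ = 1 / 2 := hr
  have hpyth := Real.sin_sq_add_cos_sq θ
  rw [abs_le]
  constructor <;> nlinarith [sq_nonneg (Real.cos θ * b ^ 2 - Real.sin θ * a ^ 2),
    sq_nonneg (Real.cos θ * a ^ 2 - Real.sin θ * b ^ 2),
    sq_nonneg (Real.cos θ * a ^ 2 + Real.sin θ * b ^ 2 + 1 / Real.sqrt 2),
    sq_nonneg (Real.cos θ * a ^ 2 + Real.sin θ * b ^ 2 - 1 / Real.sqrt 2),
    sq_nonneg (a ^ 2), sq_nonneg (b ^ 2), sq_nonneg (a*b)]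

/-- If `x (n+2) = cos θ * (x (n+1))^2 + sin θ * (x n)^2` (with `x 0, x 1` playing the
roles of `x₋₁, x₀`) and the initial values have absolute value at most `1/√2`,
then the whole sequence stays in the ball of radius `1/√2`. -/
theorem stmt0 (θ : ℝ) (x : ℕ → ℝ)
    (hrec : ∀ n : ℕ, x (n + 2) = Real.cos θ * (x (n + 1)) ^ 2 + Real.sin θ * (x n) ^ 2)
    (h0 : |x 0| ≤ 1 / Real.sqrt 2) (h1 : |x 1| ≤ 1 / Real.sqrt 2) :
    ∀ n : ℕ, |x n| ≤ 1 / Real.sqrt 2 := by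
  intro n
  induction n using Nat.strong_induction_on with
  | _ n ih =>
    match n with
    | 0 => exact h0
    | 1 => exact h1
    | (m + 2) =>
      rw [hrec m]
      exact key_step θ (x (m+1)) (x m) (ih (m+1) (by omega)) (ih m (by omega))
end

section
/- Let a, b ≥ 0 with a + b > 0 and let x* = 1/(a + b). If (x_n) satisfies x_{n+1} = a·x_n² + b·x_{n-1}² with 0 ≤ x_{-1} < x* and 0 ≤ x_0 < x*, then x_n < x* for all n, and moreover x_n ≤ M^(2^⌊n/2⌋)·x* where M = max(x_{-1}, x_0)/x* < 1; in particular x_n → 0. -/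
open Filter Topology

theorem stmt9 (a b : ℝ) (ha : 0 ≤ a) (hb : 0 ≤ b) (hab : 0 < a + b) (x : ℕ → ℝ)
    (hrec : ∀ n : ℕ, x (n + 2) = a * (x (n + 1)) ^ 2 + b * (x n) ^ 2)
    (h0 : 0 ≤ x 0) (h0' : x 0 < 1 / (a + b))
    (h1 : 0 ≤ x 1) (h1' : x 1 < 1 / (a + b)) :
    (∀ n : ℕ, x n < 1 / (a + b)) ∧
      max (x 0) (x 1) / (1 / (a + b)) < 1 ∧
      (∀ n : ℕ, x (n + 1) ≤ (max (x 0) (x 1) / (1 / (a + b))) ^ (2 ^ (n / 2)) * (1 / (a + b))) ∧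
      Tendsto x atTop (𝓝 0) := by
  set s := 1 / (a + b) with hs
  have hspos : 0 < s := by positivity
  set M : ℝ := max (x 0) (x 1) / s with hM
  have hM0 : 0 ≤ M := div_nonneg (le_trans h0 (le_max_left _ _)) hspos.le
  have hM1 : M < 1 := (div_lt_one hspos).mpr (max_lt h0' h1')
  have hMs : M * s = max (x 0) (x 1) := div_mul_cancel₀ _ hspos.ne'
  have hx0 : x 0 ≤ M * s := hMs ▸ le_max_left _ _
  have hx1 : x 1 ≤ M * s := hMs ▸ le_max_right _ _
  -- nonnegativity
  have hnn : ∀ n, 0 ≤ x n := by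
    intro n
    induction n using Nat.strong_induction_on with
    | _ n ih =>
      match n with
      | 0 => exact h0
      | 1 => exact h1
      | (m + 2) =>
        rw [hrec m]
        have := ih (m + 1) (by omega)
        have := ih m (by omega)
        positivity
  -- key combination step
  have hstep : ∀ (c u v : ℝ), 0 ≤ c → 0 ≤ u → u ≤ c → 0 ≤ v → v ≤ c →
      a * u ^ 2 + b * v ^ 2 ≤ (a + b) * c ^ 2 := by
    intro c u v hc hu huc hv hvc
    nlinarith [mul_le_mul huc huc hu hc, mul_le_mul hvc hvc hv hc]
  have habs : (a + b) * s ^ 2 = s := by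
    rw [hs]; field_simp
  -- the main bound, two steps at a time
  have key : ∀ n : ℕ, x (n + 1) ≤ M ^ (2 ^ (n / 2)) * s ∧
      x (n + 2) ≤ M ^ (2 ^ ((n + 1) / 2)) * s := by
    intro n
    induction n with
    | zero =>
      constructor
      · simpa using hx1
      · have h2 : x 2 ≤ (a + b) * (M * s) ^ 2 := by
          rw [hrec 0]
          exact hstep (M * s) (x 1) (x 0) (by positivity) h1 hx1 h0 hx0
        have : (a + b) * (M * s) ^ 2 = M ^ 2 * s := by
          rw [mul_pow]; nlinarith [habs]
        rw [this] at h2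
        show x 2 ≤ M ^ 2 ^ (1 / 2) * s
        norm_num
        calc x 2 ≤ M ^ 2 * s := h2
          _ ≤ M ^ 1 * s := by
            exact mul_le_mul_of_nonneg_right (pow_le_pow_of_le_one hM0 hM1.le (by omega))
              hspos.le
          _ = M * s := by ring
    | succ n ih =>
      obtain ⟨ih1, ih2⟩ := ih
      refine ⟨ih2, ?_⟩
      set k := 2 ^ (n / 2) with hk
      have hk1 : 2 ^ ((n + 1) / 2) ≤ 2 * k := by
        rw [hk, ← pow_succ']
        exact Nat.pow_le_pow_right (by norm_num) (by omega)
      have hk2 : (n + 2) / 2 = n / 2 + 1 := by omega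
      have hMk : (0:ℝ) ≤ M ^ k * s := by positivity
      have hle2 : x (n + 2) ≤ M ^ k * s := le_trans ih2 (mul_le_mul_of_nonneg_right
        (pow_le_pow_of_le_one hM0 hM1.le (Nat.pow_le_pow_right (by norm_num) (by omega)))
        hspos.le)
      have h3 : x (n + 3) ≤ (a + b) * (M ^ k * s) ^ 2 := by
        rw [show n + 3 = (n + 1) + 2 from rfl, hrec (n + 1)]
        exact hstep (M ^ k * s) (x (n + 2)) (x (n + 1)) hMk (hnn _) hle2 (hnn _) ih1
      have heq : (a + b) * (M ^ k * s) ^ 2 = M ^ (2 * k) * s := by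
        rw [mul_pow, pow_mul']; nlinarith [habs, sq_nonneg (M ^ k)]
      rw [heq] at h3
      rw [hk2, pow_succ']
      exact h3
  have hbound : ∀ n : ℕ, x (n + 1) ≤ M ^ (2 ^ (n / 2)) * s := fun n => (key n).1
  -- all terms below s
  have hall : ∀ n, x n < s := by
    intro n
    match n with
    | 0 => exact h0'
    | (m + 1) =>
      calc x (m + 1) ≤ M ^ (2 ^ (m / 2)) * s := hbound m
        _ < 1 * s := by
          exact mul_lt_mul_of_pos_right (pow_lt_one₀ hM0 hM1 (by positivity)) hspos
        _ = s := one_mul s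
  refine ⟨hall, hM1, hbound, ?_⟩
  -- convergence
  have hsq : Tendsto (fun n : ℕ => M ^ (n / 2 + 1) * s) atTop (𝓝 0) := by
    have h1 : Tendsto (fun k : ℕ => M ^ k) atTop (𝓝 0) :=
      tendsto_pow_atTop_nhds_zero_of_lt_one hM0 hM1
    have h2 : Tendsto (fun n : ℕ => n / 2 + 1) atTop atTop := by
      apply tendsto_atTop_atTop.mpr
      intro c
      exact ⟨2 * c, fun n hn => by omega⟩
    have := (h1.comp h2).mul_const s
    simpa using this
  have hshift : Tendsto (fun n : ℕ => x (n + 1)) atTop (𝓝 0) := by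
    apply squeeze_zero (fun n => hnn (n + 1)) _ hsq
    intro n
    calc x (n + 1) ≤ M ^ (2 ^ (n / 2)) * s := hbound n
      _ ≤ M ^ (n / 2 + 1) * s := by
        refine mul_le_mul_of_nonneg_right (pow_le_pow_of_le_one hM0 hM1.le ?_) hspos.le
        exact Nat.lt_two_pow_self (n := n / 2)
  exact (tendsto_add_atTop_iff_nat 1).mp hshift
end
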